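/- Let X and Y be complex Hilbert spaces, let D : Y → X be a bounded linear operator with closed range, and let S : X → Y be a bounded linear operator such that S∘D : Y → Y is bijective. Then the map Φ : X → X defined by Φ(x) = x − D((S∘D)⁻¹(S(x))) takes values in ker S, and its restriction to ker D* (the kernel of the Hilbert-space adjoint of D) is a linear bijection from ker D* onto ker S. -/

import Mathlib

open ContinuousLinearMap

/-- Functional-analytic core of the paper's Lemma 2.14: if `D : Y → X` is a bounded
operator with closed range between complex Hilbert spaces and `S : X → Y` is bounded with
`S∘D` bijective, then `Φ(x) = x − D((S∘D)⁻¹(S x))` takes values in `ker S` and restricts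
to a (linear) bijection from `ker D*` onto `ker S`. -/
theorem kernel_identification {X Y : Type*}
    [NormedAddCommGroup X] [InnerProductSpace ℂ X] [CompleteSpace X]
    [NormedAddCommGroup Y] [InnerProductSpace ℂ Y] [CompleteSpace Y]
    (D : Y →L[ℂ] X) (S : X →L[ℂ] Y)
    (hD : IsClosed (Set.range D))
    (h : Function.Bijective (S ∘L D)) :
    (∀ x : X,
      x - D ((LinearEquiv.ofBijective (S ∘L D).toLinearMap h).symm (S x))
        ∈ LinearMap.ker (S : X →ₗ[ℂ] Y)) ∧
    Set.BijOn
      (fun x : X => x - D ((LinearEquiv.ofBijective (S ∘L D).toLinearMap h).symm (S x)))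
      (LinearMap.ker (ContinuousLinearMap.adjoint D : X →ₗ[ℂ] Y) : Set X)
      (LinearMap.ker (S : X →ₗ[ℂ] Y) : Set X) := by
  set E := LinearEquiv.ofBijective (S ∘L D).toLinearMap h with hE
  have hEapp : ∀ v : Y, E v = S (D v) := fun v => rfl
  have hker : ∀ x : X, x - D (E.symm (S x)) ∈ LinearMap.ker (S : X →ₗ[ℂ] Y) := by
    intro x
    have h1 : S (D (E.symm (S x))) = S x := by
      have := E.apply_symm_apply (S x)
      simpa [hEapp] using this
    simp [LinearMap.mem_ker, map_sub, h1]
  refine ⟨hker, ?_, ?_, ?_⟩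
  · intro x _
    exact hker x
  · intro x₁ h₁ x₂ h₂ heq
    simp only [SetLike.mem_coe, LinearMap.mem_ker, ContinuousLinearMap.coe_coe] at h₁ h₂
    simp only at heq
    have hd : x₁ - x₂ = D (E.symm (S x₁) - E.symm (S x₂)) := by
      rw [map_sub]
      exact sub_eq_sub_iff_sub_eq_sub.mp heq
    have hz : (inner ℂ (x₁ - x₂) (x₁ - x₂) : ℂ) = 0 := by
      nth_rewrite 2 [hd]
      rw [← ContinuousLinearMap.adjoint_inner_left, map_sub, h₁, h₂, sub_self,
        inner_zero_left]
    have := inner_self_eq_zero.mp hz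
    exact sub_eq_zero.mp this
  · intro y hy
    simp only [SetLike.mem_coe, LinearMap.mem_ker] at hy
    have hD' : IsClosed ((LinearMap.range (D : Y →ₗ[ℂ] X) : Submodule ℂ X) : Set X) := by
      rwa [LinearMap.coe_range]
    haveI : CompleteSpace (LinearMap.range (D : Y →ₗ[ℂ] X) : Submodule ℂ X) := hD'.completeSpace_coe
    obtain ⟨u, hu, x, hx, rfl⟩ :=
      Submodule.exists_add_mem_mem_orthogonal (K := (LinearMap.range (D : Y →ₗ[ℂ] X) : Submodule ℂ X)) y
    obtain ⟨w, hw⟩ := hu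
    rw [ContinuousLinearMap.coe_coe] at hw
    have hxker : x ∈ LinearMap.ker (ContinuousLinearMap.adjoint D : X →ₗ[ℂ] Y) := by
      rw [LinearMap.mem_ker, ContinuousLinearMap.coe_coe]
      apply ext_inner_right ℂ
      intro v
      rw [ContinuousLinearMap.adjoint_inner_left, inner_zero_left]
      have := (Submodule.mem_orthogonal _ x).mp hx (D v) ⟨v, rfl⟩
      simpa [inner_eq_zero_symm] using this
    refine ⟨x, hxker, ?_⟩
    simp only
    have hSx : E.symm (S x) = -w := by
      apply E.injective
      rw [E.apply_symm_apply, map_neg, hEapp, hw]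
      have h0 : S u + S x = 0 := by rw [← map_add]; exact hy
      exact (neg_eq_of_add_eq_zero_right h0).symm
    rw [hSx, map_neg, sub_neg_eq_add, hw, add_comm]
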